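/- arXiv:1701.06680 — 2 statements merged into one kernel-verified Lean document; each statement's English description precedes it below -/
import Mathlib

section
/- Let γ : [0,T] → ℝ³ be absolutely continuous with |γ'(s)| = 1 for a.e. s ∈ [0,T], and let ω ∈ L²([0,T];ℝ³). Define the rotated curve γ_ω(s) = γ(s) + ∫₀^s ω(σ) × (γ(s) − γ(σ)) dσ. Then for a.e. s ∈ [0,T] one has |γ_ω'(s)|² = 1 + | ( ∫₀^s ω(σ) dσ ) × γ'(s) |². In particular |γ_ω'(s)|² ≤ 1 + ‖ω‖²_{L¹([0,s])}. -/
open MeasureTheory Set Classical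
noncomputable section

/-- Three-dimensional Euclidean space. -/
abbrev E3 : Type := EuclideanSpace ℝ (Fin 3)

/-- The cross product on `ℝ³`. -/
def cross (u v : E3) : E3 :=
  WithLp.toLp 2 ![u 1 * v 2 - u 2 * v 1, u 2 * v 0 - u 0 * v 2, u 0 * v 1 - u 1 * v 0]

/-- The Euclidean inner product on `ℝ³`. -/
def rinner (u v : E3) : ℝ := inner ℝ u v

/-- The signed distance to the boundary of `Ω`: negative inside `Ω`, positive outside. -/
def signedDist' (Ω : Set E3) (x : E3) : ℝ :=
  if x ∈ Ω then -(Metric.infDist x (frontier Ω)) else Metric.infDist x (frontier Ω)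

/-- The (unit) outer normal to `Ω`, i.e. the gradient of the signed distance. -/
def outerNormal (Ω : Set E3) (x : E3) : E3 := gradient (signedDist' Ω) x

/-- The set `Ω` has boundary of class `C^k`: near every boundary point, `Ω` is the sublevel
set of a `C^k` defining function with nonvanishing gradient. -/
def HasCkBoundary (Ω : Set E3) (k : ℕ∞) : Prop :=
  ∀ x ∈ frontier Ω, ∃ (U : Set E3) (f : E3 → ℝ), IsOpen U ∧ x ∈ U ∧
    ContDiffOn ℝ k f U ∧ (∀ y ∈ U, gradient f y ≠ 0) ∧
    Ω ∩ U = {y ∈ U | f y < 0} ∧ frontier Ω ∩ U = {y ∈ U | f y = 0}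

/-- `γ`, together with its derivative `γd` and second derivative `γdd`, is a curve of Sobolev
class `H²` on `[0,T]`: `γ` and `γd` are absolutely continuous with the stated derivatives,
and `γdd` is square integrable. -/
def IsH2Curve (T : ℝ) (γ γd γdd : ℝ → E3) : Prop :=
  (∀ s ∈ Icc (0:ℝ) T, γ s = γ 0 + ∫ σ in (0:ℝ)..s, γd σ) ∧
  (∀ s ∈ Icc (0:ℝ) T, γd s = γd 0 + ∫ σ in (0:ℝ)..s, γdd σ) ∧
  MemLp γdd 2 (volume.restrict (Icc (0:ℝ) T))

/-- The `L²` norm of `ω` on `[0,T]`. -/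
def L2norm (T : ℝ) (ω : ℝ → E3) : ℝ := Real.sqrt (∫ s in (0:ℝ)..T, ‖ω s‖ ^ 2)

/-- The `H²` norm of a curve on `[0,T]` (given together with its two derivatives). -/
def H2norm (T : ℝ) (v vd vdd : ℝ → E3) : ℝ :=
  Real.sqrt ((∫ s in (0:ℝ)..T, ‖v s‖ ^ 2) + (∫ s in (0:ℝ)..T, ‖vd s‖ ^ 2) +
    (∫ s in (0:ℝ)..T, ‖vdd s‖ ^ 2))

/-- Membership in the tube `V_ρ` around the (extended) initial curve `γ₀`:
`γ(0) = 0`, `γ'(0) = γ₀'(0)`, `|γ'| ≡ 1` on `[0,T]`, and `∫₀^T |γ'' − γ₀''|² ≤ ρ`. -/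
def InTube (T ρ : ℝ) (γ₀d0 : E3) (γ₀dd : ℝ → E3) (γ γd γdd : ℝ → E3) : Prop :=
  IsH2Curve T γ γd γdd ∧ γ 0 = 0 ∧ γd 0 = γ₀d0 ∧
  (∀ s ∈ Icc (0:ℝ) T, ‖γd s‖ = 1) ∧
  (∫ s in (0:ℝ)..T, ‖γdd s - γ₀dd s‖ ^ 2) ≤ ρ

/-- The second derivative of the curve `γ₀` extended linearly beyond `t₀`. -/
def extendSecond (t₀ : ℝ) (γ₀dd : ℝ → E3) : ℝ → E3 :=
  fun s => if s ≤ t₀ then γ₀dd s else 0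

/-- The rotated curve `γ_ω(s) = γ(s) + ∫₀^s ω(σ) × (γ(s) − γ(σ)) dσ`. -/
def rotCurve (γ ω : ℝ → E3) (s : ℝ) : E3 :=
  γ s + ∫ σ in (0:ℝ)..s, cross (ω σ) (γ s - γ σ)

/-- The elastic cost `J(ω) = ∫₀^T e^{β(t−s)} |ω(s)|² ds`. -/
def Jcost (β t T : ℝ) (ω : ℝ → E3) : ℝ :=
  ∫ s in (0:ℝ)..T, Real.exp (β * (t - s)) * ‖ω s‖ ^ 2

/-- The maximal depth `E(t,γ,Ω)` at which `γ|_{[0,t]}` penetrates inside `Ω` (zero if it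
does not enter `Ω`). -/
def penDepth (t : ℝ) (γ : ℝ → E3) (Ω : Set E3) : ℝ :=
  sSup (insert 0 {d | ∃ s ∈ Icc (0:ℝ) t, γ s ∈ Ω ∧ d = Metric.infDist (γ s) (frontier Ω)})

/-- The breakdown configuration (B): the tip touches the obstacle perpendicularly, and the
curve is straight (a.e.) wherever it does not touch the boundary. -/
def Breakdown (Ω : Set E3) (t₀ : ℝ) (γ γd γdd : ℝ → E3) : Prop :=
  γ t₀ ∈ frontier Ω ∧ γd t₀ = - outerNormal Ω (γ t₀) ∧
  (∀ᵐ s : ℝ, s ∈ Ioo (0:ℝ) t₀ → γ s ∉ frontier Ω → γdd s = 0)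

/-- The linear map `v ↦ w × v`. -/
def crossLM (w : E3) : E3 →ₗ[ℝ] E3 where
  toFun v := cross w v
  map_add' a b := by
    ext i
    fin_cases i <;> simp [cross, PiLp.add_apply] <;> ring
  map_smul' c a := by
    ext i
    fin_cases i <;> simp [cross, PiLp.smul_apply, smul_eq_mul] <;> ring

/-- The continuous linear map `A(w) : v ↦ w × v`. -/
def crossCLM (w : E3) : E3 →L[ℝ] E3 := LinearMap.toContinuousLinearMap (crossLM w)

/-- The rotation `R[w] = exp(A(w))`, where `A(w)v = w × v`. -/
def rotOf (w : E3) : E3 →L[ℝ] E3 := NormedSpace.exp (crossCLM w)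

section Helpers
open Filter Topology intervalIntegral

lemma ae_hasDerivAt_primitive {E : Type*} [NormedAddCommGroup E] [NormedSpace ℝ E]
    [CompleteSpace E] (g : ℝ → E) (hg : Integrable g) :
    ∀ᵐ x : ℝ, HasDerivAt (fun t => ∫ σ in (0:ℝ)..t, g σ) (g x) x := by
  have hloc : LocallyIntegrable g volume := hg.locallyIntegrable
  filter_upwards [(IsUnifLocDoublingMeasure.vitaliFamily (volume : Measure ℝ)
      1).ae_tendsto_average_norm_sub hloc] with x hx
  have hr : Tendsto (fun y => ⨍ t in Icc x y, ‖g t - g x‖) (𝓝[>] x) (𝓝 0) :=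
    hx.comp (Real.tendsto_Icc_vitaliFamily_right x)
  have hl : Tendsto (fun y => ⨍ t in Icc y x, ‖g t - g x‖) (𝓝[<] x) (𝓝 0) :=
    hx.comp (Real.tendsto_Icc_vitaliFamily_left x)
  rw [hasDerivAt_iff_tendsto_slope]
  have havg : Tendsto (fun y => ⨍ t in uIcc x y, ‖g t - g x‖) (𝓝[≠] x) (𝓝 0) := by
    rw [← nhdsLT_sup_nhdsGT x, tendsto_sup]
    constructor
    · apply hl.congr'
      filter_upwards [self_mem_nhdsWithin] with y (hy : y < x)
      rw [uIcc_of_ge hy.le]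
    · apply hr.congr'
      filter_upwards [self_mem_nhdsWithin] with y (hy : x < y)
      rw [uIcc_of_le hy.le]
  have key : ∀ y : ℝ, y ≠ x → ‖slope (fun t => ∫ σ in (0:ℝ)..t, g σ) x y - g x‖ ≤
      ⨍ t in uIcc x y, ‖g t - g x‖ := by
    intro y hy
    have hint : ∀ a b : ℝ, IntervalIntegrable g volume a b := fun a b =>
      hg.intervalIntegrable
    have h1 : (∫ σ in (0:ℝ)..y, g σ) - ∫ σ in (0:ℝ)..x, g σ = ∫ σ in x..y, g σ :=
      integral_interval_sub_left (hint 0 y) (hint 0 x)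
    have h2 : slope (fun t => ∫ σ in (0:ℝ)..t, g σ) x y - g x
        = (y - x)⁻¹ • ∫ σ in x..y, (g σ - g x) := by
      rw [slope_def_module, h1, intervalIntegral.integral_sub (hint x y)
        (intervalIntegrable_const), intervalIntegral.integral_const, smul_sub, smul_smul,
        inv_mul_cancel₀ (sub_ne_zero.2 hy), one_smul]
    rw [h2, norm_smul, norm_inv, Real.norm_eq_abs]
    have hvol : (volume (uIcc x y)).toReal = |y - x| := by
      rw [Real.volume_interval, ENNReal.toReal_ofReal (abs_nonneg _)]
    rw [setAverage_eq, smul_eq_mul, measureReal_def, hvol]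
    have hIcc : (∫ t in uIcc x y, ‖g t - g x‖) = ∫ t in uIoc x y, ‖g t - g x‖ := by
      rw [uIcc, integral_Icc_eq_integral_Ioc]; rfl
    rw [hIcc]
    have hb : ‖∫ σ in x..y, (g σ - g x)‖ ≤ ∫ t in uIoc x y, ‖g t - g x‖ :=
      intervalIntegral.norm_integral_le_integral_norm_uIoc
    have hpos : (0:ℝ) ≤ |y - x|⁻¹ := inv_nonneg.2 (abs_nonneg _)
    exact mul_le_mul_of_nonneg_left hb hpos
  have : Tendsto (fun y => ‖slope (fun t => ∫ σ in (0:ℝ)..t, g σ) x y - g x‖) (𝓝[≠] x) (𝓝 0) := by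
    apply squeeze_zero' (Eventually.of_forall fun y => norm_nonneg _)
    · filter_upwards [self_mem_nhdsWithin] with y (hy : y ≠ x) using key y hy
    · exact havg
  exact tendsto_iff_norm_sub_tendsto_zero.2 this

lemma cross_apply0 (u v : E3) : cross u v 0 = u 1 * v 2 - u 2 * v 1 := rfl
lemma cross_apply1 (u v : E3) : cross u v 1 = u 2 * v 0 - u 0 * v 2 := rfl
lemma cross_apply2 (u v : E3) : cross u v 2 = u 0 * v 1 - u 1 * v 0 := rfl

lemma cross_sub_right (u a b : E3) : cross u (a - b) = cross u a - cross u b := by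
  ext i
  fin_cases i <;> simp [cross, PiLp.sub_apply] <;> ring

lemma cross_antisymm (u v : E3) : cross u v = - cross v u := by
  ext i
  fin_cases i <;> simp [cross, PiLp.neg_apply] <;> ring

lemma inner_self_cross (w v : E3) : (inner ℝ v (cross w v) : ℝ) = 0 := by
  simp only [PiLp.inner_apply, RCLike.inner_apply, starRingEnd_apply, star_trivial,
    Fin.sum_univ_three, cross_apply0, cross_apply1, cross_apply2]
  ring

lemma euclid_norm_sq (x : E3) : ‖x‖ ^ 2 = x 0 ^ 2 + x 1 ^ 2 + x 2 ^ 2 := by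
  rw [EuclideanSpace.norm_eq, Real.sq_sqrt (by positivity)]
  simp [Fin.sum_univ_three, sq_abs]

lemma norm_cross_le (u v : E3) : ‖cross u v‖ ≤ ‖u‖ * ‖v‖ := by
  have h1 : ‖cross u v‖ ^ 2 ≤ (‖u‖ * ‖v‖) ^ 2 := by
    rw [euclid_norm_sq, mul_pow, euclid_norm_sq u, euclid_norm_sq v,
      cross_apply0, cross_apply1, cross_apply2]
    nlinarith [sq_nonneg (u 0 * v 0 + u 1 * v 1 + u 2 * v 2), sq_nonneg (u 0 * v 1 - u 1 * v 0),
      sq_nonneg (u 0 * v 2 - u 2 * v 0), sq_nonneg (u 1 * v 2 - u 2 * v 1)]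
  exact (pow_le_pow_iff_left₀ (norm_nonneg _) (by positivity) two_ne_zero).1 h1

lemma isBoundedBilinearMap_cross : IsBoundedBilinearMap ℝ (fun p : E3 × E3 => cross p.1 p.2) := by
  refine ⟨fun a b v => ?_, fun c a v => ?_, fun a u v => ?_, fun c a v => ?_, 1, one_pos, ?_⟩
  · ext i; fin_cases i <;> simp [cross, PiLp.add_apply] <;> ring
  · ext i; fin_cases i <;> simp [cross, PiLp.smul_apply, smul_eq_mul] <;> ring
  · ext i; fin_cases i <;> simp [cross, PiLp.add_apply] <;> ring
  · ext i; fin_cases i <;> simp [cross, PiLp.smul_apply, smul_eq_mul] <;> ring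
  · intro u v; rw [one_mul]; exact norm_cross_le u v

lemma cross_neg_swap (u v : E3) : -(cross u v) = cross v u := (cross_antisymm v u).symm

end Helpers

/-- for a.e. `s`, the rotated curve `γ_ω` is differentiable at `s` and
`|γ_ω'(s)|² = 1 + |(∫₀^s ω) × γ'(s)|² ≤ 1 + ‖ω‖²_{L¹([0,s])}`. -/
theorem rotated_curve_derivative_norm_sq
    (T : ℝ) (hT : 0 < T) (γ γd : ℝ → E3)
    (hγac : ∀ s ∈ Icc (0:ℝ) T, γ s = γ 0 + ∫ σ in (0:ℝ)..s, γd σ)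
    (hγd : IntegrableOn γd (Icc (0:ℝ) T))
    (hunit : ∀ᵐ s : ℝ, s ∈ Icc (0:ℝ) T → ‖γd s‖ = 1)
    (ω : ℝ → E3) (hω : MemLp ω 2 (volume.restrict (Icc (0:ℝ) T))) :
    ∀ᵐ s : ℝ, s ∈ Icc (0:ℝ) T →
      ∃ d : E3, HasDerivAt (rotCurve γ ω) d s ∧
        ‖d‖ ^ 2 = 1 + ‖cross (∫ σ in (0:ℝ)..s, ω σ) (γd s)‖ ^ 2 ∧
        ‖d‖ ^ 2 ≤ 1 + (∫ σ in (0:ℝ)..s, ‖ω σ‖) ^ 2 := by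
  
  have hωint : IntegrableOn ω (Icc (0:ℝ) T) := hω.integrable (by norm_num)
  -- indicator versions
  set ωI : ℝ → E3 := (Icc (0:ℝ) T).indicator ω with hωIdef
  set γdI : ℝ → E3 := (Icc (0:ℝ) T).indicator γd with hγdIdef
  have hωIint : Integrable ωI := (integrable_indicator_iff measurableSet_Icc).2 hωint
  have hγdIint : Integrable γdI := (integrable_indicator_iff measurableSet_Icc).2 hγd
  -- the primitive of γd
  set G : ℝ → E3 := fun t => γ 0 + ∫ σ in (0:ℝ)..t, γdI σ with hGdef
  have hGcont : Continuous G := continuous_const.add (hγdIint.continuous_primitive 0)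
  have hγG : ∀ t ∈ Icc (0:ℝ) T, γ t = G t := by
    intro t ht
    rw [hγac t ht, hGdef]
    congr 1
    apply intervalIntegral.integral_congr
    intro σ hσ
    rw [uIcc_of_le ht.1] at hσ
    exact (indicator_of_mem (Icc_subset_Icc le_rfl ht.2 hσ) γd).symm
  -- integrand for the correction term
  set h : ℝ → E3 := (Icc (0:ℝ) T).indicator (fun σ => cross (ω σ) (γ σ)) with hhdef
  have hγaesm : AEStronglyMeasurable γ (volume.restrict (Icc (0:ℝ) T)) := by
    apply ((hGcont.continuousOn (s := Icc (0:ℝ) T)).aestronglyMeasurable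
      measurableSet_Icc).congr
    filter_upwards [ae_restrict_mem measurableSet_Icc] with t ht using (hγG t ht).symm
  have hcrosscont : Continuous (fun p : E3 × E3 => cross p.1 p.2) :=
    isBoundedBilinearMap_cross.continuous
  obtain ⟨C, hC⟩ : ∃ C : ℝ, ∀ t ∈ Icc (0:ℝ) T, ‖γ t‖ ≤ C := by
    obtain ⟨C, hC⟩ := (isCompact_Icc.image_of_continuousOn
      (hGcont.continuousOn (s := Icc (0:ℝ) T))).isBounded.subset_closedBall 0
    refine ⟨C, fun t ht => ?_⟩
    have := hC (mem_image_of_mem G ht)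
    rw [hγG t ht]
    simpa [Metric.mem_closedBall, dist_eq_norm] using this
  have hhint : Integrable h := by
    rw [hhdef, integrable_indicator_iff measurableSet_Icc]
    apply Integrable.mono' (g := fun σ => ‖ω σ‖ * C)
    · exact hωint.norm.mul_const C
    · exact hcrosscont.comp_aestronglyMeasurable (hω.1.prodMk hγaesm)
    · filter_upwards [ae_restrict_mem measurableSet_Icc] with t ht
      exact (norm_cross_le _ _).trans (mul_le_mul_of_nonneg_left (hC t ht) (norm_nonneg _))
  -- the representation of rotCurve
  set W : ℝ → E3 := fun t => ∫ σ in (0:ℝ)..t, ωI σ with hWdef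
  set F : ℝ → E3 := fun t => ∫ σ in (0:ℝ)..t, h σ with hFdef
  set R : ℝ → E3 := fun t => G t + (cross (W t) (G t) - F t) with hRdef
  have hkey : ∀ t ∈ Icc (0:ℝ) T, rotCurve γ ω t = R t := by
    intro t ht
    have hsub : Icc (0:ℝ) t ⊆ Icc (0:ℝ) T := Icc_subset_Icc le_rfl ht.2
    have hstep1 : (∫ σ in (0:ℝ)..t, cross (ω σ) (γ t - γ σ))
        = ∫ σ in (0:ℝ)..t, (-(crossCLM (γ t) (ωI σ)) - h σ) := by
      apply intervalIntegral.integral_congr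
      intro σ hσ
      rw [uIcc_of_le ht.1] at hσ
      have hσT : σ ∈ Icc (0:ℝ) T := hsub hσ
      show cross (ω σ) (γ t - γ σ) = -(crossCLM (γ t)) (ωI σ) - h σ
      have e1 : ωI σ = ω σ := indicator_of_mem hσT ω
      have e2 : h σ = cross (ω σ) (γ σ) := indicator_of_mem hσT _
      rw [cross_sub_right, e1, e2]
      have e3 : (crossCLM (γ t)) (ω σ) = cross (γ t) (ω σ) := rfl
      rw [e3, cross_antisymm (ω σ) (γ t)]
    have hintA : Integrable (fun σ => -(crossCLM (γ t) (ωI σ))) :=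
      ((crossCLM (γ t)).integrable_comp hωIint).neg
    have hstep2 : (∫ σ in (0:ℝ)..t, (-(crossCLM (γ t) (ωI σ)) - h σ))
        = (∫ σ in (0:ℝ)..t, -(crossCLM (γ t) (ωI σ))) - F t := by
      rw [hFdef]
      exact intervalIntegral.integral_sub hintA.intervalIntegrable hhint.intervalIntegrable
    have hstep3 : (∫ σ in (0:ℝ)..t, -(crossCLM (γ t) (ωI σ))) = cross (W t) (γ t) := by
      rw [intervalIntegral.integral_neg, (crossCLM (γ t)).intervalIntegral_comp_comm
        hωIint.intervalIntegrable]
      exact (cross_antisymm (W t) (γ t)).symm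
    have hrc : rotCurve γ ω t = γ t + (cross (W t) (γ t) - F t) := by
      show γ t + (∫ σ in (0:ℝ)..t, cross (ω σ) (γ t - γ σ)) = _
      rw [hstep1, hstep2, hstep3]
    rw [hrc]
    simp only [hRdef]
    rw [hγG t ht]
  -- a.e. properties
  have haux : ∀ᵐ s : ℝ, s ≠ 0 ∧ s ≠ T := by
    have h0 : ∀ᵐ s : ℝ, s ≠ 0 := by
      rw [ae_iff]
      simp only [not_not, setOf_eq_eq_singleton]
      exact measure_singleton 0
    have h1 : ∀ᵐ s : ℝ, s ≠ T := by
      rw [ae_iff]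
      simp only [not_not, setOf_eq_eq_singleton]
      exact measure_singleton T
    exact h0.and h1
  filter_upwards [ae_hasDerivAt_primitive ωI hωIint, ae_hasDerivAt_primitive γdI hγdIint,
    ae_hasDerivAt_primitive h hhint, hunit, haux] with s hWd hGd hFd hu hne hmem
  have hs : s ∈ Ioo (0:ℝ) T := ⟨lt_of_le_of_ne hmem.1 (Ne.symm hne.1), lt_of_le_of_ne hmem.2 hne.2⟩
  -- derivative of R
  have hGd' : HasDerivAt G (γdI s) s := hGd.const_add (γ 0)
  have hpair : HasDerivAt (fun t => (W t, G t)) (ωI s, γdI s) s := hWd.prodMk hGd'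
  have hBder : HasDerivAt (fun t => cross (W t) (G t))
      (cross (W s) (γdI s) + cross (ωI s) (G s)) s := by
    have := (isBoundedBilinearMap_cross.hasFDerivAt (W s, G s)).comp_hasDerivAt s hpair
    simp at this
    exact this
  have hRd : HasDerivAt R (γdI s + (cross (W s) (γdI s) + cross (ωI s) (G s) - h s)) s :=
    hGd'.add (hBder.sub hFd)
  -- identify values
  have hWs : W s = ∫ σ in (0:ℝ)..s, ω σ := by
    apply intervalIntegral.integral_congr
    intro σ hσ
    rw [uIcc_of_le hmem.1] at hσ
    exact indicator_of_mem (Icc_subset_Icc le_rfl hmem.2 hσ) ω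
  have hγdIs : γdI s = γd s := indicator_of_mem hmem γd
  have hωIs : ωI s = ω s := indicator_of_mem hmem ω
  have hhs : h s = cross (ω s) (γ s) := indicator_of_mem hmem _
  have hGs : G s = γ s := (hγG s hmem).symm
  set d : E3 := γd s + cross (∫ σ in (0:ℝ)..s, ω σ) (γd s) with hddef
  have hdval : γdI s + (cross (W s) (γdI s) + cross (ωI s) (G s) - h s) = d := by
    rw [hγdIs, hωIs, hGs, hhs, hWs, hddef]
    abel
  refine ⟨d, ?_, ?_, ?_⟩
  · rw [← hdval]
    apply hRd.congr_of_eventuallyEq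
    filter_upwards [Ioo_mem_nhds hs.1 hs.2] with t ht
    exact hkey t (Ioo_subset_Icc_self ht)
  · have hin : (inner ℝ (γd s) (cross (∫ σ in (0:ℝ)..s, ω σ) (γd s)) : ℝ) = 0 :=
      inner_self_cross _ _
    rw [hddef, norm_add_sq_real, hin, hu hmem]
    ring
  · have h1 : ‖cross (∫ σ in (0:ℝ)..s, ω σ) (γd s)‖ ≤ ∫ σ in (0:ℝ)..s, ‖ω σ‖ := by
      calc ‖cross (∫ σ in (0:ℝ)..s, ω σ) (γd s)‖
          ≤ ‖∫ σ in (0:ℝ)..s, ω σ‖ * ‖γd s‖ := norm_cross_le _ _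
        _ = ‖∫ σ in (0:ℝ)..s, ω σ‖ := by rw [hu hmem, mul_one]
        _ ≤ ∫ σ in (0:ℝ)..s, ‖ω σ‖ := intervalIntegral.norm_integral_le_integral_norm hmem.1
    have h2 : ‖cross (∫ σ in (0:ℝ)..s, ω σ) (γd s)‖ ^ 2 ≤ (∫ σ in (0:ℝ)..s, ‖ω σ‖) ^ 2 :=
      pow_le_pow_left₀ (norm_nonneg _) h1 2
    have hin : (inner ℝ (γd s) (cross (∫ σ in (0:ℝ)..s, ω σ) (γd s)) : ℝ) = 0 :=
      inner_self_cross _ _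
    rw [hddef, norm_add_sq_real, hin, hu hmem]
    linarith
end
end

section
/- Let t > 0, let γ : [0,t] → ℝ³ be continuous, let ω̄, ω̂ ∈ L²([0,t];ℝ³), let μ be a finite positive Borel measure on [0,t], and let Φ ∈ C¹(ℝ³;ℝ). For ε ∈ ℝ, let γ_{ω̄+εω̂} denote the rotated curve associated with the angular velocity ω̄ + εω̂. Then the map ε ↦ ∫_{[0,t]} Φ( γ_{ω̄+εω̂}(τ) ) dμ(τ) is differentiable at ε = 0, with derivative d/dε |_{ε=0} ∫_{[0,t]} Φ( γ_{ω̄+εω̂}(τ) ) dμ(τ) = − ∫₀^t ⟨ ω̂(σ) , ∫_{[σ,t]} ∇Φ( γ_{ω̄}(τ) ) × ( γ(τ) − γ(σ) ) dμ(τ) ⟩ dσ. -/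
open MeasureTheory Set Classical
noncomputable section

namespace FVaux

def crossL : E3 →ₗ[ℝ] E3 →L[ℝ] E3 where
  toFun w := crossCLM w
  map_add' a b := by
    ext v i
    fin_cases i <;>
      simp [crossCLM, crossLM, cross, PiLp.add_apply] <;> ring
  map_smul' c a := by
    ext v i
    fin_cases i <;>
      simp [crossCLM, crossLM, cross, PiLp.smul_apply, smul_eq_mul] <;> ring

def crossB : E3 →L[ℝ] E3 →L[ℝ] E3 := LinearMap.toContinuousLinearMap crossL

lemma crossB_apply (u v : E3) : crossB u v = cross u v := rfl

lemma cross_norm_le (u v : E3) : ‖cross u v‖ ≤ ‖crossB‖ * ‖u‖ * ‖v‖ :=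
  crossB.le_opNorm₂ u v

lemma cross_add_left (a b v : E3) : cross (a + b) v = cross a v + cross b v := by
  rw [← crossB_apply, ← crossB_apply, ← crossB_apply, map_add]; rfl

lemma cross_smul_left (c : ℝ) (a v : E3) : cross (c • a) v = c • cross a v := by
  rw [← crossB_apply, ← crossB_apply, _root_.map_smul]; rfl

lemma cross_sub_right (u a b : E3) : cross u (a - b) = cross u a - cross u b :=
  (crossB u).map_sub a b

lemma inner_cross_swap (u v w : E3) :
    (inner ℝ u (cross v w) : ℝ) = -(inner ℝ v (cross u w) : ℝ) := by
  simp only [cross, PiLp.inner_apply, RCLike.inner_apply, conj_trivial,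
    Fin.sum_univ_three, Matrix.cons_val_zero, Matrix.cons_val_one, Matrix.head_cons,
    Matrix.cons_val_two, Matrix.tail_cons]
  ring

lemma continuous_cross2 : Continuous (fun p : E3 × E3 => cross p.1 p.2) := by
  have := crossB.isBoundedBilinearMap.continuous
  simpa [crossB_apply] using this

lemma AESM.cross {α : Type*} {f g : α → E3} [MeasurableSpace α] {ν : Measure α}
    (hf : AEStronglyMeasurable f ν) (hg : AEStronglyMeasurable g ν) :
    AEStronglyMeasurable (fun x => cross (f x) (g x)) ν :=
  continuous_cross2.comp_aestronglyMeasurable (hf.prodMk hg)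

variable {t : ℝ} {γ w : ℝ → E3}

lemma integrableOn_cross_gamma (hγ : ContinuousOn γ (Icc 0 t))
    (hw : IntegrableOn w (Icc 0 t)) {s : ℝ} (hs : s ∈ Icc 0 t) :
    IntegrableOn (fun σ => cross (w σ) (γ s - γ σ)) (Ioc 0 s) := by
  obtain ⟨M, hM⟩ := isCompact_Icc.exists_bound_of_continuousOn hγ
  have hsub : Ioc (0:ℝ) s ⊆ Icc 0 t := fun x hx => ⟨hx.1.le, hx.2.trans hs.2⟩
  have hwm : AEStronglyMeasurable w (volume.restrict (Ioc 0 s)) :=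
    hw.aestronglyMeasurable.mono_measure (Measure.restrict_mono hsub le_rfl)
  have hγm : AEStronglyMeasurable (fun σ => γ s - γ σ) (volume.restrict (Ioc 0 s)) :=
    (continuousOn_const.sub (hγ.mono hsub)).aestronglyMeasurable measurableSet_Ioc
  refine Integrable.mono' ((hw.mono_set hsub).norm.const_mul (‖crossB‖ * (‖γ s‖ + M)))
    (AESM.cross hwm hγm) ?_
  filter_upwards [ae_restrict_mem measurableSet_Ioc] with σ hσ
  calc ‖cross (w σ) (γ s - γ σ)‖ ≤ ‖crossB‖ * ‖w σ‖ * ‖γ s - γ σ‖ := cross_norm_le _ _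
    _ ≤ ‖crossB‖ * ‖w σ‖ * (‖γ s‖ + M) := by
        refine mul_le_mul_of_nonneg_left ((norm_sub_le _ _).trans ?_) (by positivity)
        exact add_le_add le_rfl (hM _ (hsub hσ))
    _ = ‖crossB‖ * (‖γ s‖ + M) * ‖w σ‖ := by ring

lemma intervalIntegrable_cross_gamma (hγ : ContinuousOn γ (Icc 0 t))
    (hw : IntegrableOn w (Icc 0 t)) {s : ℝ} (hs : s ∈ Icc 0 t) :
    IntervalIntegrable (fun σ => cross (w σ) (γ s - γ σ)) volume 0 s := by
  rw [intervalIntegrable_iff_integrableOn_Ioc_of_le hs.1]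
  exact integrableOn_cross_gamma hγ hw hs

lemma integrableOn_cross_gamma_self (hγ : ContinuousOn γ (Icc 0 t))
    (hw : IntegrableOn w (Icc 0 t)) :
    IntegrableOn (fun σ => cross (w σ) (γ σ)) (Icc 0 t) := by
  obtain ⟨M, hM⟩ := isCompact_Icc.exists_bound_of_continuousOn hγ
  have hwm : AEStronglyMeasurable w (volume.restrict (Icc 0 t)) := hw.aestronglyMeasurable
  have hγm : AEStronglyMeasurable γ (volume.restrict (Icc 0 t)) :=
    hγ.aestronglyMeasurable measurableSet_Icc
  refine Integrable.mono' (hw.norm.const_mul (‖crossB‖ * M)) (AESM.cross hwm hγm) ?_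
  filter_upwards [ae_restrict_mem measurableSet_Icc] with σ hσ
  calc ‖cross (w σ) (γ σ)‖ ≤ ‖crossB‖ * ‖w σ‖ * ‖γ σ‖ := cross_norm_le _ _
    _ ≤ ‖crossB‖ * ‖w σ‖ * M :=
        mul_le_mul_of_nonneg_left (hM _ hσ) (by positivity)
    _ = ‖crossB‖ * M * ‖w σ‖ := by ring

lemma crossInt_decomp (hγ : ContinuousOn γ (Icc 0 t))
    (hw : IntegrableOn w (Icc 0 t)) {s : ℝ} (hs : s ∈ Icc 0 t) :
    (∫ σ in (0:ℝ)..s, cross (w σ) (γ s - γ σ)) =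
      crossB.flip (γ s) (∫ σ in (0:ℝ)..s, w σ) - ∫ σ in (0:ℝ)..s, cross (w σ) (γ σ) := by
  have hsub : Ioc (0:ℝ) s ⊆ Icc 0 t := fun x hx => ⟨hx.1.le, hx.2.trans hs.2⟩
  have hwInt : IntervalIntegrable w volume 0 s := by
    rw [intervalIntegrable_iff_integrableOn_Ioc_of_le hs.1]
    exact hw.mono_set hsub
  have h1 : IntervalIntegrable (fun σ => cross (w σ) (γ s)) volume 0 s := by
    rw [intervalIntegrable_iff_integrableOn_Ioc_of_le hs.1]
    have := (crossB.flip (γ s)).integrable_comp (hw.mono_set hsub)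
    exact this
  have h2 : IntervalIntegrable (fun σ => cross (w σ) (γ σ)) volume 0 s := by
    rw [intervalIntegrable_iff_integrableOn_Ioc_of_le hs.1]
    exact (integrableOn_cross_gamma_self hγ hw).mono_set hsub
  have heq : (fun σ => cross (w σ) (γ s - γ σ)) =
      fun σ => cross (w σ) (γ s) - cross (w σ) (γ σ) := by
    funext σ; exact cross_sub_right _ _ _
  rw [heq, intervalIntegral.integral_sub h1 h2]
  congr 1
  rw [← ContinuousLinearMap.intervalIntegral_comp_comm _ hwInt]
  simp [crossB_apply]

lemma continuousOn_crossInt (ht : 0 ≤ t) (hγ : ContinuousOn γ (Icc 0 t))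
    (hw : IntegrableOn w (Icc 0 t)) :
    ContinuousOn (fun s => ∫ σ in (0:ℝ)..s, cross (w σ) (γ s - γ σ)) (Icc 0 t) := by
  have hu : uIcc (0:ℝ) t = Icc 0 t := uIcc_of_le ht
  have hW : ContinuousOn (fun s => ∫ σ in (0:ℝ)..s, w σ) (Icc 0 t) := by
    rw [← hu] at hw ⊢
    exact intervalIntegral.continuousOn_primitive_interval hw
  have hP : ContinuousOn (fun s => ∫ σ in (0:ℝ)..s, cross (w σ) (γ σ)) (Icc 0 t) := by
    have h2 := integrableOn_cross_gamma_self hγ hw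
    rw [← hu] at h2 ⊢
    exact intervalIntegral.continuousOn_primitive_interval h2
  have hbil : Continuous (fun p : E3 × E3 => crossB.flip p.1 p.2) :=
    crossB.flip.isBoundedBilinearMap.continuous
  refine ContinuousOn.congr (((hbil.comp_continuousOn (hγ.prodMk hW))).sub hP) ?_
  intro s hs
  exact crossInt_decomp hγ hw hs

lemma rotCurve_split (hγ : ContinuousOn γ (Icc 0 t)) {w1 w2 : ℝ → E3}
    (hw1 : IntegrableOn w1 (Icc 0 t)) (hw2 : IntegrableOn w2 (Icc 0 t))
    {s : ℝ} (hs : s ∈ Icc 0 t) (ε : ℝ) :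
    rotCurve γ (fun σ => w1 σ + ε • w2 σ) s =
      rotCurve γ w1 s + ε • ∫ σ in (0:ℝ)..s, cross (w2 σ) (γ s - γ σ) := by
  unfold rotCurve
  have h1 := intervalIntegrable_cross_gamma hγ hw1 hs
  have h2 := intervalIntegrable_cross_gamma hγ hw2 hs
  have heq : (fun σ => cross (w1 σ + ε • w2 σ) (γ s - γ σ)) =
      fun σ => cross (w1 σ) (γ s - γ σ) + ε • cross (w2 σ) (γ s - γ σ) := by
    funext σ; rw [cross_add_left, cross_smul_left]
  have h2' : IntervalIntegrable (fun σ => ε • cross (w2 σ) (γ s - γ σ)) volume 0 s :=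
    h2.smul ε
  rw [heq, intervalIntegral.integral_add h1 h2', intervalIntegral.integral_smul, add_assoc]

end FVaux

open FVaux
set_option maxHeartbeats 3200000 in
/-- first variation of `ε ↦ ∫ Φ(γ_{ω̄+εω̂}(τ)) dμ(τ)` at `ε = 0`. -/
theorem first_variation_obstacle_functional
    (t : ℝ) (ht : 0 < t) (γ : ℝ → E3) (hγ : ContinuousOn γ (Icc (0:ℝ) t))
    (ωbar ωhat : ℝ → E3)
    (hωbar : MemLp ωbar 2 (volume.restrict (Icc (0:ℝ) t)))
    (hωhat : MemLp ωhat 2 (volume.restrict (Icc (0:ℝ) t)))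
    (μ : Measure ℝ) [IsFiniteMeasure μ] (hμsupp : μ ((Icc (0:ℝ) t)ᶜ) = 0)
    (Φ : E3 → ℝ) (hΦ : ContDiff ℝ 1 Φ) :
    HasDerivAt
      (fun ε : ℝ =>
        ∫ τ in Icc (0:ℝ) t, Φ (rotCurve γ (fun σ => ωbar σ + ε • ωhat σ) τ) ∂μ)
      (-∫ σ in (0:ℝ)..t, rinner (ωhat σ)
          (∫ τ in Icc σ t, cross (gradient Φ (rotCurve γ ωbar τ)) (γ τ - γ σ) ∂μ))
      0 := by
  classical
  have htIcc : (0:ℝ) ∈ Icc (0:ℝ) t := left_mem_Icc.2 ht.le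
  haveI : IsFiniteMeasure (volume.restrict (Icc (0:ℝ) t)) :=
    ⟨by rw [Measure.restrict_apply_univ]; simp [Real.volume_Icc]⟩
  have hμae : ∀ᵐ τ ∂μ, τ ∈ Icc (0:ℝ) t := by
    rw [ae_iff]
    simpa [Set.compl_def] using hμsupp
  have hrest : μ.restrict (Icc (0:ℝ) t) = μ := Measure.restrict_eq_self_of_ae_mem hμae
  have hωbarInt : IntegrableOn ωbar (Icc (0:ℝ) t) := hωbar.integrable one_le_two
  have hωhatInt : IntegrableOn ωhat (Icc (0:ℝ) t) := hωhat.integrable one_le_two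
  set A : ℝ → E3 := rotCurve γ ωbar with hA
  set b : ℝ → E3 := fun τ => ∫ σ in (0:ℝ)..τ, cross (ωhat σ) (γ τ - γ σ) with hb
  have hAcont : ContinuousOn A (Icc (0:ℝ) t) := by
    rw [hA]
    exact hγ.add (continuousOn_crossInt ht.le hγ hωbarInt)
  have hbcont : ContinuousOn b (Icc (0:ℝ) t) := continuousOn_crossInt ht.le hγ hωhatInt
  have hgc : Continuous (gradient Φ) := by
    unfold gradient
    exact (LinearIsometryEquiv.continuous _).comp (hΦ.continuous_fderiv one_ne_zero)
  obtain ⟨Ca, hCa⟩ := isCompact_Icc.exists_bound_of_continuousOn hAcont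
  obtain ⟨Cb, hCb⟩ := isCompact_Icc.exists_bound_of_continuousOn hbcont
  have hCa0 : (0:ℝ) ≤ Ca := (norm_nonneg _).trans (hCa 0 htIcc)
  have hCb0 : (0:ℝ) ≤ Cb := (norm_nonneg _).trans (hCb 0 htIcc)
  obtain ⟨CΦ, hCΦ⟩ := (isCompact_closedBall (0:E3) (Ca + Cb)).exists_bound_of_continuousOn
      hgc.continuousOn
  have funrw : (fun ε : ℝ =>
      ∫ τ in Icc (0:ℝ) t, Φ (rotCurve γ (fun σ => ωbar σ + ε • ωhat σ) τ) ∂μ) =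
      fun ε : ℝ => ∫ τ, Φ (A τ + ε • b τ) ∂μ := by
    funext ε
    conv_rhs => rw [← hrest]
    refine setIntegral_congr_fun measurableSet_Icc fun τ hτ => ?_
    rw [rotCurve_split hγ hωbarInt hωhatInt hτ ε, hA, hb]
  -- dominated differentiation
  have hmeas : ∀ ε : ℝ, AEStronglyMeasurable (fun τ => Φ (A τ + ε • b τ)) μ := by
    intro ε
    rw [← hrest]
    exact (hΦ.continuous.comp_continuousOn
      (hAcont.add (hbcont.const_smul ε))).aestronglyMeasurable measurableSet_Icc
  have hint : Integrable (fun τ => Φ (A τ + (0:ℝ) • b τ)) μ := by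
    rw [← hrest]
    exact ContinuousOn.integrableOn_compact isCompact_Icc
      (hΦ.continuous.comp_continuousOn (hAcont.add (hbcont.const_smul (0:ℝ))))
  have hF'meas : AEStronglyMeasurable
      (fun τ => (inner ℝ (gradient Φ (A τ + (0:ℝ) • b τ)) (b τ) : ℝ)) μ := by
    rw [← hrest]
    exact (ContinuousOn.inner
      (hgc.comp_continuousOn (hAcont.add (hbcont.const_smul (0:ℝ)))) hbcont).aestronglyMeasurable
      measurableSet_Icc
  have hbound : ∀ᵐ τ ∂μ, ∀ ε ∈ Metric.ball (0:ℝ) 1,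
      ‖(inner ℝ (gradient Φ (A τ + ε • b τ)) (b τ) : ℝ)‖ ≤ CΦ * Cb := by
    filter_upwards [hμae] with τ hτ
    intro ε hε
    have hmem : A τ + ε • b τ ∈ Metric.closedBall (0:E3) (Ca + Cb) := by
      rw [Metric.mem_closedBall, dist_zero_right]
      have hε1 : |ε| ≤ 1 := le_of_lt (by simpa [Real.dist_eq] using hε)
      calc ‖A τ + ε • b τ‖ ≤ ‖A τ‖ + ‖ε • b τ‖ := norm_add_le _ _
        _ ≤ Ca + Cb := by
            rw [norm_smul]
            refine add_le_add (hCa τ hτ) ?_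
            have h1 : ‖ε‖ * ‖b τ‖ ≤ 1 * Cb :=
              mul_le_mul hε1 (hCb τ hτ) (norm_nonneg _) zero_le_one
            simpa using h1
    have hCΦ0 : (0:ℝ) ≤ CΦ := (norm_nonneg _).trans
      (hCΦ 0 (by simp [Metric.mem_closedBall]; positivity))
    calc ‖(inner ℝ (gradient Φ (A τ + ε • b τ)) (b τ) : ℝ)‖
        ≤ ‖gradient Φ (A τ + ε • b τ)‖ * ‖b τ‖ := norm_inner_le_norm _ _
      _ ≤ CΦ * Cb := mul_le_mul (hCΦ _ hmem) (hCb τ hτ) (norm_nonneg _) hCΦ0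
  have hdiff : ∀ᵐ τ ∂μ, ∀ ε ∈ Metric.ball (0:ℝ) 1,
      HasDerivAt (fun ε' => Φ (A τ + ε' • b τ))
        ((inner ℝ (gradient Φ (A τ + ε • b τ)) (b τ) : ℝ)) ε := by
    refine Filter.Eventually.of_forall fun τ ε _ => ?_
    have hline : HasDerivAt (fun ε' : ℝ => A τ + ε' • b τ) (b τ) ε := by
      simpa using ((hasDerivAt_id ε).smul_const (b τ)).const_add (A τ)
    have hgrad := ((hΦ.differentiable one_ne_zero) (A τ + ε • b τ)).hasGradientAt
    have hc := hgrad.hasFDerivAt.comp_hasDerivAt ε hline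
    rw [InnerProductSpace.toDual_apply_apply] at hc
    exact hc
  have key := hasDerivAt_integral_of_dominated_loc_of_deriv_le (μ := μ)
    (F := fun ε τ => Φ (A τ + ε • b τ))
    (F' := fun ε τ => (inner ℝ (gradient Φ (A τ + ε • b τ)) (b τ) : ℝ))
    (x₀ := (0:ℝ)) (bound := fun _ => CΦ * Cb) (Metric.ball_mem_nhds _ zero_lt_one)
    (Filter.Eventually.of_forall hmeas) hint hF'meas hbound (integrable_const _) hdiff
  -- now prove the value identity
  set ν : Measure ℝ := volume.restrict (Ioc (0:ℝ) t) with hν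
  set G : ℝ × ℝ → ℝ :=
    fun p => -(inner ℝ (ωhat p.1) (cross (gradient Φ (A p.2)) (γ p.2 - γ p.1)) : ℝ) with hG
  set S : Set (ℝ × ℝ) := {p : ℝ × ℝ | p.1 ≤ p.2} with hS
  have hSmeas : MeasurableSet S := measurableSet_le measurable_fst measurable_snd
  set H : ℝ × ℝ → ℝ := S.indicator G with hH
  have hσae : ∀ᵐ σ ∂ν, σ ∈ Ioc (0:ℝ) t := ae_restrict_mem measurableSet_Ioc
  have hωhat_ν : AEStronglyMeasurable ωhat ν :=
    hωhat.1.mono_measure (Measure.restrict_mono Ioc_subset_Icc_self le_rfl)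
  have hγ_ν : AEStronglyMeasurable γ ν :=
    (hγ.mono Ioc_subset_Icc_self).aestronglyMeasurable measurableSet_Ioc
  have hγ_μ : AEStronglyMeasurable γ μ := by
    rw [← hrest]; exact hγ.aestronglyMeasurable measurableSet_Icc
  have hgA_μ : AEStronglyMeasurable (fun τ => gradient Φ (A τ)) μ := by
    rw [← hrest]; exact (hgc.comp_continuousOn hAcont).aestronglyMeasurable measurableSet_Icc
  have hGmeas : AEStronglyMeasurable G (ν.prod μ) := by
    refine AEStronglyMeasurable.neg ?_
    exact AEStronglyMeasurable.inner hωhat_ν.comp_fst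
      (AESM.cross hgA_μ.comp_snd (hγ_μ.comp_snd.sub hγ_ν.comp_fst))
  have hp1 : ∀ᵐ p ∂(ν.prod μ), p.1 ∈ Ioc (0:ℝ) t :=
    Measure.quasiMeasurePreserving_fst.tendsto_ae.eventually hσae
  have hp2 : ∀ᵐ p ∂(ν.prod μ), p.2 ∈ Icc (0:ℝ) t :=
    Measure.quasiMeasurePreserving_snd.tendsto_ae.eventually hμae
  obtain ⟨Cγ, hCγ⟩ := isCompact_Icc.exists_bound_of_continuousOn hγ
  obtain ⟨Cg, hCg⟩ := isCompact_Icc.exists_bound_of_continuousOn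
    (hgc.comp_continuousOn hAcont)
  have hCγ0 : (0:ℝ) ≤ Cγ := (norm_nonneg _).trans (hCγ 0 htIcc)
  have hCg0 : (0:ℝ) ≤ Cg := (norm_nonneg _).trans (hCg 0 htIcc)
  have hGint : Integrable G (ν.prod μ) := by
    have hdom : Integrable
        (fun p : ℝ × ℝ => (‖crossB‖ * Cg * (Cγ + Cγ) * ‖ωhat p.1‖) * (1:ℝ)) (ν.prod μ) :=
      Integrable.mul_prod
        (((hωhatInt.mono_set Ioc_subset_Icc_self).norm).const_mul
          (‖crossB‖ * Cg * (Cγ + Cγ))) (integrable_const 1)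
    refine Integrable.mono' (by simpa using hdom) hGmeas ?_
    filter_upwards [hp1, hp2] with p h1 h2
    have hb1 := cross_norm_le (gradient Φ (A p.2)) (γ p.2 - γ p.1)
    calc ‖G p‖
        = ‖(inner ℝ (ωhat p.1) (cross (gradient Φ (A p.2)) (γ p.2 - γ p.1)) : ℝ)‖ := by
          rw [hG]; exact norm_neg _
      _ ≤ ‖ωhat p.1‖ * ‖cross (gradient Φ (A p.2)) (γ p.2 - γ p.1)‖ := norm_inner_le_norm _ _
      _ ≤ ‖ωhat p.1‖ * (‖crossB‖ * Cg * (Cγ + Cγ)) := by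
          have h3 : ‖γ p.2 - γ p.1‖ ≤ Cγ + Cγ := (norm_sub_le _ _).trans
            (add_le_add (hCγ _ h2) (hCγ _ (Ioc_subset_Icc_self h1)))
          have h4 : ‖gradient Φ (A p.2)‖ ≤ Cg := hCg _ h2
          have h5 : ‖cross (gradient Φ (A p.2)) (γ p.2 - γ p.1)‖ ≤ ‖crossB‖ * Cg * (Cγ + Cγ) :=
            hb1.trans (mul_le_mul (mul_le_mul_of_nonneg_left h4 crossB.opNorm_nonneg) h3
              (norm_nonneg _) (mul_nonneg crossB.opNorm_nonneg hCg0))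
          exact mul_le_mul_of_nonneg_left h5 (norm_nonneg _)
      _ = ‖crossB‖ * Cg * (Cγ + Cγ) * ‖ωhat p.1‖ := by ring
  have hHint : Integrable H (ν.prod μ) := hGint.indicator hSmeas
  have step2 : ∀ τ ∈ Icc (0:ℝ) t,
      (∫ σ, H (σ, τ) ∂ν) = (inner ℝ (gradient Φ (A τ)) (b τ) : ℝ) := by
    intro τ hτ
    have e1 : (fun σ => H (σ, τ)) = (Iic τ).indicator (fun σ => G (σ, τ)) := by
      funext σ
      simp only [hH, hS, Set.indicator_apply, Set.mem_setOf_eq, Set.mem_Iic]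
    have e2 : Ioc (0:ℝ) t ∩ Iic τ = Ioc 0 τ := by
      ext x
      simp only [mem_inter_iff, mem_Ioc, mem_Iic]
      exact ⟨fun h => ⟨h.1.1, h.2⟩, fun h => ⟨⟨h.1, h.2.trans hτ.2⟩, h.2⟩⟩
    have hint2 : IntegrableOn (fun σ => cross (ωhat σ) (γ τ - γ σ)) (Ioc 0 τ) :=
      integrableOn_cross_gamma hγ hωhatInt hτ
    have e3 : (fun σ => G (σ, τ)) =
        fun σ => (innerSL ℝ (gradient Φ (A τ))) (cross (ωhat σ) (γ τ - γ σ)) := by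
      funext σ
      simp only [hG, innerSL_apply_apply]
      rw [inner_cross_swap (gradient Φ (A τ)) (ωhat σ) (γ τ - γ σ)]
    rw [e1, hν, setIntegral_indicator measurableSet_Iic, e2, e3,
      ContinuousLinearMap.integral_comp_comm _ hint2, innerSL_apply_apply]
    simp only [hb]
    rw [intervalIntegral.integral_of_le hτ.1]
  have step4 : ∀ σ ∈ Ioc (0:ℝ) t,
      (∫ τ, H (σ, τ) ∂μ) =
        -(inner ℝ (ωhat σ) (∫ τ in Icc σ t, cross (gradient Φ (A τ)) (γ τ - γ σ) ∂μ) : ℝ) := by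
    intro σ hσ
    have e1 : (fun τ => H (σ, τ)) = (Ici σ).indicator (fun τ => G (σ, τ)) := by
      funext τ
      simp only [hH, hS, Set.indicator_apply, Set.mem_setOf_eq, Set.mem_Ici]
    have e2 : μ.restrict (Ici σ) = μ.restrict (Icc σ t) := by
      refine Measure.restrict_congr_set ?_
      rw [Filter.eventuallyEq_set]
      filter_upwards [hμae] with x hx
      simp only [mem_Ici, mem_Icc]
      exact ⟨fun h => ⟨h, hx.2⟩, fun h => h.1⟩
    have hsub : Icc σ t ⊆ Icc (0:ℝ) t := Icc_subset_Icc hσ.1.le le_rfl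
    have hcont : ContinuousOn (fun τ => cross (gradient Φ (A τ)) (γ τ - γ σ)) (Icc σ t) :=
      continuous_cross2.comp_continuousOn
        ((hgc.comp_continuousOn (hAcont.mono hsub)).prodMk
          ((hγ.mono hsub).sub continuousOn_const))
    have hintc : IntegrableOn (fun τ => cross (gradient Φ (A τ)) (γ τ - γ σ)) (Icc σ t) μ :=
      ContinuousOn.integrableOn_compact isCompact_Icc hcont
    have e3 : (fun τ => G (σ, τ)) =
        fun τ => -((innerSL ℝ (ωhat σ)) (cross (gradient Φ (A τ)) (γ τ - γ σ))) := by
      funext τ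
      simp only [hG, innerSL_apply_apply]
    rw [e1, integral_indicator measurableSet_Ici, e2, e3, integral_neg,
      ContinuousLinearMap.integral_comp_comm _ hintc, innerSL_apply_apply]
  have hswap : (∫ σ, (∫ τ, H (σ, τ) ∂μ) ∂ν) = ∫ τ, (∫ σ, H (σ, τ) ∂ν) ∂μ :=
    integral_integral_swap (f := fun σ τ => H (σ, τ)) hHint
  have hval : -∫ σ in (0:ℝ)..t, rinner (ωhat σ)
        (∫ τ in Icc σ t, cross (gradient Φ (A τ)) (γ τ - γ σ) ∂μ)
      = ∫ τ, (inner ℝ (gradient Φ (A τ + (0:ℝ) • b τ)) (b τ) : ℝ) ∂μ :=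
    calc -∫ σ in (0:ℝ)..t, rinner (ωhat σ)
          (∫ τ in Icc σ t, cross (gradient Φ (A τ)) (γ τ - γ σ) ∂μ)
        = ∫ σ, (∫ τ, H (σ, τ) ∂μ) ∂ν := by
          rw [intervalIntegral.integral_of_le ht.le, ← integral_neg]
          refine (integral_congr_ae (hσae.mono fun σ hσ => ?_)).symm
          rw [step4 σ hσ]
          rfl
      _ = ∫ τ, (∫ σ, H (σ, τ) ∂ν) ∂μ := hswap
      _ = ∫ τ, (inner ℝ (gradient Φ (A τ + (0:ℝ) • b τ)) (b τ) : ℝ) ∂μ := by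
          refine integral_congr_ae (hμae.mono fun τ hτ => ?_)
          simp only [zero_smul, add_zero]
          exact step2 τ hτ
  rw [funrw, hval]
  exact key.2
end
end
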